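/- Let m, p ≥ 1, let A be an invertible symmetric m×m real matrix, and let G be the (m+p)×(m+p) block matrix [[A, 0], [0, 0]]. If an (m+p)×(m+p) real matrix J, written in block form J = [[J₁₁, J₁₂], [J₂₁, J₂₂]] with J₁₁ of size m×m, satisfies J G Jᵀ = G, then J₁₁ A J₁₁ᵀ = A, the block J₁₁ is invertible, and J₂₁ = 0. -/

import Mathlib

open Matrix

/-- If `J` preserves the degenerate block metric `G = [[A,0],[0,0]]`
(with `A` an invertible symmetric `m × m` matrix), i.e. `J * G * Jᵀ = G`, then the
upper-left block satisfies `J₁₁ * A * J₁₁ᵀ = A`, `J₁₁` is invertible, and `J₂₁ = 0`. -/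
theorem stmt_0 (m p : ℕ) (hm : 1 ≤ m) (hp : 1 ≤ p)
    (A : Matrix (Fin m) (Fin m) ℝ) (hAsymm : A.IsSymm) (hAinv : IsUnit A.det)
    (J : Matrix (Fin m ⊕ Fin p) (Fin m ⊕ Fin p) ℝ)
    (hJ : J * Matrix.fromBlocks A 0 0 0 * Jᵀ = Matrix.fromBlocks A 0 0 0) :
    J.toBlocks₁₁ * A * (J.toBlocks₁₁)ᵀ = A ∧
    IsUnit (J.toBlocks₁₁).det ∧
    J.toBlocks₂₁ = 0 := by
  set B := J.toBlocks₁₁ with hB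
  set D := J.toBlocks₂₁ with hD
  have hJd : J = fromBlocks B J.toBlocks₁₂ D J.toBlocks₂₂ := (Matrix.fromBlocks_toBlocks J).symm
  rw [hJd, Matrix.fromBlocks_transpose, Matrix.fromBlocks_multiply, Matrix.fromBlocks_multiply] at hJ
  simp only [Matrix.mul_zero, Matrix.zero_mul, add_zero, zero_add] at hJ
  have h11 : B * A * Bᵀ = A := by
    have := congrArg Matrix.toBlocks₁₁ hJ
    simpa [Matrix.toBlocks_fromBlocks₁₁, Matrix.mul_assoc] using this
  have h21 : D * A * Bᵀ = 0 := by
    have := congrArg Matrix.toBlocks₂₁ hJ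
    simpa [Matrix.toBlocks_fromBlocks₂₁, Matrix.mul_assoc] using this
  have hBdet : IsUnit B.det := by
    have := congrArg Matrix.det h11
    rw [Matrix.det_mul, Matrix.det_mul, Matrix.det_transpose] at this
    have h2 : B.det * B.det * A.det = A.det := by ring_nf; ring_nf at this; linarith
    have ha : A.det ≠ 0 := hAinv.ne_zero
    have h3 : B.det * B.det = 1 := by
      field_simp at h2
      nlinarith [h2]
    exact isUnit_iff_exists_inv.mpr ⟨_, h3⟩
  have hD0 : D = 0 := by
    have hBT : IsUnit (Bᵀ).det := by rwa [Matrix.det_transpose]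
    have h1 : D * A = 0 := by
      have := congrArg (fun M => M * (Bᵀ)⁻¹) h21
      simpa [Matrix.mul_assoc, Matrix.mul_nonsing_inv _ hBT] using this
    have := congrArg (fun M => M * A⁻¹) h1
    simpa [Matrix.mul_assoc, Matrix.mul_nonsing_inv _ hAinv] using this
  exact ⟨h11, hBdet, hD0⟩
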